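/- (General form of the convergence theorem.) Let K ⊆ ℝ^p and L ⊆ ℝ^q be nonempty, compact, convex sets, and let f : ℝ^p × ℝ^q → ℝ be convex and continuously differentiable. Suppose sequences (x^ℓ)_{ℓ≥1} ⊆ K and (y^ℓ)_{ℓ≥1} ⊆ L satisfy, for every ℓ ≥ 1: y^ℓ minimizes f(x^ℓ, ·) over L, and x^{ℓ+1} minimizes f(·, y^ℓ) over K. Then inf_{ℓ ≥ 1} f(x^ℓ, y^ℓ) = min_{(x,y) ∈ K × L} f(x, y); i.e., the alternating (block-coordinate) minimization values converge to the global minimum of f over K × L. -/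

import Mathlib

lemma helper_deriv_nonneg {g : ℝ → ℝ} {d : ℝ} (hg : HasDerivAt g d 0)
    (h : ∀ t ∈ Set.Ioc (0:ℝ) 1, g 0 ≤ g t) : 0 ≤ d := by
  have hs : Filter.Tendsto (slope g 0) (nhdsWithin 0 {(0:ℝ)}ᶜ) (nhds d) :=
    hasDerivAt_iff_tendsto_slope.mp hg
  have hs' : Filter.Tendsto (slope g 0) (nhdsWithin (0:ℝ) (Set.Ioi 0)) (nhds d) :=
    hs.mono_left (nhdsWithin_mono 0 (fun t ht => ne_of_gt ht))
  refine ge_of_tendsto hs' ?_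
  filter_upwards [Ioo_mem_nhdsGT_of_mem (Set.mem_Ico.mpr ⟨le_refl 0, one_pos⟩)] with t ht
  rw [slope_def_field]
  have := h t ⟨ht.1, le_of_lt ht.2⟩
  have ht0 : (0:ℝ) < t - 0 := by simpa using ht.1
  exact div_nonneg (by linarith) (le_of_lt ht0)

lemma helper_dir_deriv {E : Type*} [NormedAddCommGroup E] [NormedSpace ℝ E]
    {F : E → ℝ} (hd : Differentiable ℝ F) {w v : E}
    (h : ∀ t ∈ Set.Ioc (0:ℝ) 1, F w ≤ F (w + t • v)) : 0 ≤ fderiv ℝ F w v := by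
  have hγ : HasDerivAt (fun s : ℝ => w + s • v) v 0 := by
    simpa using ((hasDerivAt_id (0:ℝ)).smul_const v).const_add w
  have hF : HasFDerivAt F (fderiv ℝ F w) ((fun s : ℝ => w + s • v) 0) := by
    simpa using (hd w).hasFDerivAt
  have hcomp : HasDerivAt (fun s : ℝ => F (w + s • v)) (fderiv ℝ F w v) 0 :=
    hF.comp_hasDerivAt 0 hγ
  refine helper_deriv_nonneg hcomp ?_
  intro t ht
  simpa using h t ht

lemma helper_grad_ineq {E : Type*} [NormedAddCommGroup E] [NormedSpace ℝ E]
    {F : E → ℝ} (hc : ConvexOn ℝ Set.univ F) (hd : Differentiable ℝ F) (w z : E) :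
    F w + fderiv ℝ F w (z - w) ≤ F z := by
  have hγ : HasDerivAt (fun s : ℝ => w + s • (z - w)) (z - w) 0 := by
    simpa using ((hasDerivAt_id (0:ℝ)).smul_const (z - w)).const_add w
  have hF : HasFDerivAt F (fderiv ℝ F w) ((fun s : ℝ => w + s • (z - w)) 0) := by
    simpa using (hd w).hasFDerivAt
  have hcomp : HasDerivAt (fun s : ℝ => F (w + s • (z - w))) (fderiv ℝ F w (z - w)) 0 :=
    hF.comp_hasDerivAt 0 hγ
  set g : ℝ → ℝ := fun s => F (w + s • (z - w)) with hg
  have hg0 : g 0 = F w := by simp [hg]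
  have hslope : Filter.Tendsto (slope g 0) (nhdsWithin (0:ℝ) (Set.Ioi 0))
      (nhds (fderiv ℝ F w (z - w))) :=
    (hasDerivAt_iff_tendsto_slope.mp hcomp).mono_left
      (nhdsWithin_mono 0 (fun t ht => ne_of_gt ht))
  have hle : fderiv ℝ F w (z - w) ≤ F z - F w := by
    refine le_of_tendsto hslope ?_
    filter_upwards [Ioo_mem_nhdsGT_of_mem (Set.mem_Ico.mpr ⟨le_refl 0, one_pos⟩)] with t ht
    rw [slope_def_field]
    have hcvx : g t ≤ (1 - t) * F w + t * F z := by
      have heq : w + t • (z - w) = (1 - t) • w + t • z := by module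
      have := hc.2 (Set.mem_univ w) (Set.mem_univ z) (by linarith [ht.2] : (0:ℝ) ≤ 1 - t)
        (le_of_lt ht.1) (by ring)
      simpa [hg, heq, smul_eq_mul] using this
    rw [hg0, div_le_iff₀ (by simpa using ht.1)]
    nlinarith [ht.1, ht.2]
  linarith

/-- General form of the convergence theorem: for a jointly convex, continuously
differentiable `f : ℝ^p × ℝ^q → ℝ` and nonempty compact convex sets `K ⊆ ℝ^p`,
`L ⊆ ℝ^q`, alternating (block-coordinate) minimization — `y^ℓ` minimizes `f(x^ℓ, ·)`
over `L` and `x^{ℓ+1}` minimizes `f(·, y^ℓ)` over `K` — satisfies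
`inf_{ℓ ≥ 1} f(x^ℓ, y^ℓ) = min_{(x,y) ∈ K × L} f(x,y)`. -/
theorem alternating_minimization_converges_to_global_min
    {p q : ℕ}
    (K : Set (EuclideanSpace ℝ (Fin p))) (L : Set (EuclideanSpace ℝ (Fin q)))
    (hKne : K.Nonempty) (hKcpt : IsCompact K) (hKcvx : Convex ℝ K)
    (hLne : L.Nonempty) (hLcpt : IsCompact L) (hLcvx : Convex ℝ L)
    (f : EuclideanSpace ℝ (Fin p) → EuclideanSpace ℝ (Fin q) → ℝ)
    (hfConvex : ConvexOn ℝ Set.univ (Function.uncurry f))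
    (hfSmooth : ContDiff ℝ 1 (Function.uncurry f))
    (x : ℕ → EuclideanSpace ℝ (Fin p)) (y : ℕ → EuclideanSpace ℝ (Fin q))
    (hxK : ∀ ℓ, 1 ≤ ℓ → x ℓ ∈ K) (hyL : ∀ ℓ, 1 ≤ ℓ → y ℓ ∈ L)
    -- `y^ℓ` minimizes `f(x^ℓ, ·)` over `L`
    (hymin : ∀ ℓ, 1 ≤ ℓ → ∀ y' ∈ L, f (x ℓ) (y ℓ) ≤ f (x ℓ) y')
    -- `x^{ℓ+1}` minimizes `f(·, y^ℓ)` over `K`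
    (hxmin : ∀ ℓ, 1 ≤ ℓ → ∀ x' ∈ K, f (x (ℓ + 1)) (y ℓ) ≤ f x' (y ℓ)) :
    ∃ m : ℝ,
      IsLeast {c : ℝ | ∃ x' ∈ K, ∃ y' ∈ L, c = f x' y'} m ∧
      IsGLB {c : ℝ | ∃ ℓ, 1 ≤ ℓ ∧ c = f (x ℓ) (y ℓ)} m := by
  classical
  set F : EuclideanSpace ℝ (Fin p) × EuclideanSpace ℝ (Fin q) → ℝ := Function.uncurry f with hF
  have hfc : Continuous F := hfSmooth.continuous
  have hFdiff : Differentiable ℝ F := hfSmooth.differentiable one_ne_zero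
  -- global minimizer
  obtain ⟨zs, hzs, hmin⟩ := (hKcpt.prod hLcpt).exists_isMinOn (hKne.prod hLne)
    hfc.continuousOn
  obtain ⟨xs, ys⟩ := zs
  obtain ⟨hxsK, hysL⟩ := hzs
  set m : ℝ := f xs ys with hm
  have hlow : ∀ x' ∈ K, ∀ y' ∈ L, m ≤ f x' y' := fun x' hx' y' hy' =>
    hmin (Set.mk_mem_prod hx' hy')
  -- value sequence
  set b : ℕ → ℝ := fun n => f (x (n + 1)) (y (n + 1)) with hb
  have hbmono : ∀ n, b (n + 1) ≤ b n := by
    intro n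
    calc f (x (n + 2)) (y (n + 2)) ≤ f (x (n + 2)) (y (n + 1)) :=
          hymin (n + 2) (by omega) _ (hyL (n + 1) (by omega))
      _ ≤ f (x (n + 1)) (y (n + 1)) :=
          hxmin (n + 1) (by omega) _ (hxK (n + 1) (by omega))
  have hbanti : Antitone b := antitone_nat_of_succ_le hbmono
  have hbdd : BddBelow (Set.range b) := by
    refine ⟨m, ?_⟩
    rintro r ⟨n, rfl⟩
    exact hlow _ (hxK (n + 1) (by omega)) _ (hyL (n + 1) (by omega))
  set c : ℝ := ⨅ n, b n with hc
  have htend : Filter.Tendsto b Filter.atTop (nhds c) := tendsto_atTop_ciInf hbanti hbdd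
  -- subsequence limit point
  set z : ℕ → EuclideanSpace ℝ (Fin p) × EuclideanSpace ℝ (Fin q) :=
    fun n => (x (n + 2), y (n + 1)) with hz
  have hzmem : ∀ n, z n ∈ K ×ˢ L := fun n =>
    Set.mk_mem_prod (hxK (n + 2) (by omega)) (hyL (n + 1) (by omega))
  obtain ⟨zh, hzhmem, φ, hφ, hzt⟩ := (hKcpt.prod hLcpt).tendsto_subseq hzmem
  obtain ⟨xh, yh⟩ := zh
  obtain ⟨hxhK, hyhL⟩ := hzhmem
  have hxt : Filter.Tendsto (fun n => x (φ n + 2)) Filter.atTop (nhds xh) :=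
    (continuous_fst.tendsto _).comp hzt
  have hyt : Filter.Tendsto (fun n => y (φ n + 1)) Filter.atTop (nhds yh) :=
    (continuous_snd.tendsto _).comp hzt
  have hφt : Filter.Tendsto φ Filter.atTop Filter.atTop := hφ.tendsto_atTop
  have hbφ : ∀ k : ℕ, Filter.Tendsto (fun n => b (φ n + k)) Filter.atTop (nhds c) :=
    fun k => htend.comp ((Filter.tendsto_add_atTop_nat k).comp hφt)
  -- middle sequence f (x (φ n + 2)) (y (φ n + 1)) tends to both c and f xh yh
  have hmidt : Filter.Tendsto (fun n => f (x (φ n + 2)) (y (φ n + 1))) Filter.atTop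
      (nhds (f xh yh)) := (hfc.tendsto _).comp hzt
  have hmidc : Filter.Tendsto (fun n => f (x (φ n + 2)) (y (φ n + 1))) Filter.atTop (nhds c) := by
    refine tendsto_of_tendsto_of_tendsto_of_le_of_le (hbφ 1) (hbφ 0) ?_ ?_
    · intro n
      exact hymin (φ n + 2) (by omega) _ (hyL (φ n + 1) (by omega))
    · intro n
      exact hxmin (φ n + 1) (by omega) _ (hxK (φ n + 1) (by omega))
  have hch : f xh yh = c := tendsto_nhds_unique hmidt hmidc
  -- partial optimality at (xh, yh)
  have hxhmin : ∀ x' ∈ K, f xh yh ≤ f x' yh := by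
    intro x' hx'
    refine le_of_tendsto_of_tendsto' hmidt
      ((hfc.tendsto _).comp (Filter.Tendsto.prodMk_nhds tendsto_const_nhds hyt)) ?_
    intro n
    exact hxmin (φ n + 1) (by omega) _ hx'
  have hyhmin : ∀ y' ∈ L, f xh yh ≤ f xh y' := by
    intro y' hy'
    rw [hch]
    refine le_of_tendsto_of_tendsto' (hbφ 1)
      ((hfc.tendsto _).comp (Filter.Tendsto.prodMk_nhds hxt tendsto_const_nhds)) ?_
    intro n
    exact hymin (φ n + 2) (by omega) _ hy'
  -- gradient argument : f xh yh ≤ m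
  have hxd : (0:ℝ) ≤ fderiv ℝ F (xh, yh) (xs - xh, 0) := by
    refine helper_dir_deriv hFdiff ?_
    intro t ht
    have hmem : xh + t • (xs - xh) ∈ K := by
      have := hKcvx hxhK hxsK (by linarith [ht.2] : (0:ℝ) ≤ 1 - t) (le_of_lt ht.1) (by ring)
      have heq : xh + t • (xs - xh) = (1 - t) • xh + t • xs := by module
      rwa [heq]
    have heq : ((xh, yh) : EuclideanSpace ℝ (Fin p) × EuclideanSpace ℝ (Fin q))
        + t • ((xs - xh, 0)) = (xh + t • (xs - xh), yh) := by
      simp [Prod.ext_iff]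
    rw [heq]
    exact hxhmin _ hmem
  have hyd : (0:ℝ) ≤ fderiv ℝ F (xh, yh) (0, ys - yh) := by
    refine helper_dir_deriv hFdiff ?_
    intro t ht
    have hmem : yh + t • (ys - yh) ∈ L := by
      have := hLcvx hyhL hysL (by linarith [ht.2] : (0:ℝ) ≤ 1 - t) (le_of_lt ht.1) (by ring)
      have heq : yh + t • (ys - yh) = (1 - t) • yh + t • ys := by module
      rwa [heq]
    have heq : ((xh, yh) : EuclideanSpace ℝ (Fin p) × EuclideanSpace ℝ (Fin q))
        + t • ((0, ys - yh)) = (xh, yh + t • (ys - yh)) := by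
      simp [Prod.ext_iff]
    rw [heq]
    exact hyhmin _ hmem
  have hgrad := helper_grad_ineq hfConvex hFdiff (xh, yh) (xs, ys)
  have hsplit : ((xs, ys) : EuclideanSpace ℝ (Fin p) × EuclideanSpace ℝ (Fin q)) - (xh, yh)
      = (xs - xh, 0) + (0, ys - yh) := by
    simp [Prod.ext_iff]
  rw [hsplit, map_add] at hgrad
  have hFw : F (xh, yh) = f xh yh := rfl
  have hFz : F (xs, ys) = m := rfl
  have hcm : f xh yh ≤ m := by
    rw [hFw, hFz] at hgrad; linarith
  have hmc : m ≤ f xh yh := hlow _ hxhK _ hyhL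
  have hcmeq : c = m := by rw [← hch]; linarith
  refine ⟨m, ⟨⟨xs, hxsK, ys, hysL, rfl⟩, ?_⟩, ?_, ?_⟩
  · rintro r ⟨x', hx', y', hy', rfl⟩
    exact hlow _ hx' _ hy'
  · rintro r ⟨ℓ, hℓ, rfl⟩
    exact hlow _ (hxK ℓ hℓ) _ (hyL ℓ hℓ)
  · intro r hr
    rw [← hcmeq]
    refine ge_of_tendsto htend ?_
    filter_upwards with n
    exact hr ⟨n + 1, by omega, rfl⟩
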